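/- For every ψ ∈ ℂ^V with ψ ≠ 0, the right-hand side of the dissipative nonlinear Schrödinger equation satisfies Re⟨F(ψ, w), ψ⟩ = 0; consequently, if ψ : ℝ → ℂ^V is differentiable, ψ(t) ≠ 0 for all t, and ψ′(t) = F(ψ(t), w) for all t, then ‖ψ(t)‖ = ‖ψ(0)‖ for all t (the norm of the solution is conserved, so the unit sphere S^{2|V|−1} ⊂ ℂ^V is invariant under the flow). -/

import Mathlib

open Finset

/-- The weighted graph Laplacian `(Δ(w)ψ)(v) = Σ_{u∈V} w(v,u) · (ψ(v) − ψ(u))`. -/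
noncomputable def lapW {V : Type*} [Fintype V] (w : V × V → ℝ) (ψ : V → ℂ) (v : V) : ℂ :=
  ∑ u, ((w (v, u) : ℝ) : ℂ) * (ψ v - ψ u)

/-- The standard inner product `⟨ψ, φ⟩ = Σ_{v∈V} ψ(v) · conj(φ(v))` on `ℂ^V`. -/
noncomputable def innC {V : Type*} [Fintype V] (ψ φ : V → ℂ) : ℂ :=
  ∑ v, ψ v * (starRingEnd ℂ) (φ v)

/-- The dissipation term `D(ψ, w)(v) = (Δ(w)ψ)(v) + (|ψ(v)|² − a(v)) · ψ(v)`. -/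
noncomputable def dissip {V : Type*} [Fintype V] (w : V × V → ℝ) (a : V → ℝ)
    (ψ : V → ℂ) (v : V) : ℂ :=
  lapW w ψ v + ((‖ψ v‖ ^ 2 - a v : ℝ) : ℂ) * ψ v

/-- The orthogonal projector `P_ψ^⊥ x = x − (⟨x, ψ⟩/‖ψ‖²)·ψ` (with `‖ψ‖² = ⟨ψ, ψ⟩`). -/
noncomputable def projPerp {V : Type*} [Fintype V] (ψ x : V → ℂ) : V → ℂ :=
  x - (innC x ψ / innC ψ ψ) • ψ

/-- The right-hand side `F(ψ, w) = −i·H(w)ψ − γ·P_ψ^⊥ D(ψ, w)` of the dissipative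
nonlinear Schrödinger equation, where `H(w)ψ = Δ(w)ψ + a·ψ`. -/
noncomputable def Fnls {V : Type*} [Fintype V] (w : V × V → ℝ) (a : V → ℝ) (γ : ℝ)
    (ψ : V → ℂ) : V → ℂ :=
  fun v => -Complex.I * (lapW w ψ v + ((a v : ℝ) : ℂ) * ψ v)
    - ((γ : ℝ) : ℂ) * projPerp ψ (dissip w a ψ) v

/-- `⟨Δ(w)ψ, ψ⟩` is real for symmetric `w`. -/
lemma lap_sum_real {V : Type*} [Fintype V] (w : V × V → ℝ)
    (hw : ∀ u v : V, w (u, v) = w (v, u)) (ψ : V → ℂ) :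
    (∑ v, lapW w ψ v * (starRingEnd ℂ) (ψ v)).im = 0 := by
  set L := ∑ v, lapW w ψ v * (starRingEnd ℂ) (ψ v) with hLdef
  have h1 : L = ∑ v, ∑ u, ((w (v,u) : ℝ) : ℂ) * (ψ v - ψ u) * (starRingEnd ℂ) (ψ v) := by
    simp [hLdef, lapW, Finset.sum_mul]
  have h2 : L = ∑ v, ∑ u, ((w (v,u) : ℝ) : ℂ) * (ψ u - ψ v) * (starRingEnd ℂ) (ψ u) := by
    rw [h1, Finset.sum_comm]
    refine Finset.sum_congr rfl fun u _ => Finset.sum_congr rfl fun v _ => ?_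
    rw [hw v u]
  have h3 : L + L = ((∑ v, ∑ u, w (v,u) * Complex.normSq (ψ v - ψ u) : ℝ) : ℂ) := by
    calc L + L = (∑ v, ∑ u, ((w (v,u) : ℝ) : ℂ) * (ψ v - ψ u) * (starRingEnd ℂ) (ψ v))
        + ∑ v, ∑ u, ((w (v,u) : ℝ) : ℂ) * (ψ u - ψ v) * (starRingEnd ℂ) (ψ u) := by
          rw [← h1, ← h2]
      _ = _ := by
          push_cast
          rw [← Finset.sum_add_distrib]
          refine Finset.sum_congr rfl fun v _ => ?_
          rw [← Finset.sum_add_distrib]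
          refine Finset.sum_congr rfl fun u _ => ?_
          have e : (starRingEnd ℂ) (ψ v) - (starRingEnd ℂ) (ψ u)
              = (starRingEnd ℂ) (ψ v - ψ u) := (map_sub _ _ _).symm
          calc ((w (v,u) : ℝ) : ℂ) * (ψ v - ψ u) * (starRingEnd ℂ) (ψ v)
                + ((w (v,u) : ℝ) : ℂ) * (ψ u - ψ v) * (starRingEnd ℂ) (ψ u)
              = ((w (v,u) : ℝ) : ℂ) * ((ψ v - ψ u)
                  * ((starRingEnd ℂ) (ψ v) - (starRingEnd ℂ) (ψ u))) := by ring
            _ = ((w (v,u) : ℝ) : ℂ) * ((ψ v - ψ u) * (starRingEnd ℂ) (ψ v - ψ u)) := by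
                  rw [e]
            _ = _ := by rw [Complex.mul_conj]
  have h4 := congrArg Complex.im h3
  simp only [Complex.add_im, Complex.ofReal_im] at h4
  linarith

/-- `⟨ψ, ψ⟩ ≠ 0` for nonzero `ψ`. -/
lemma innC_self_ne {V : Type*} [Fintype V] {ψ : V → ℂ} (h : ψ ≠ 0) : innC ψ ψ ≠ 0 := by
  have he : innC ψ ψ = ((∑ v, Complex.normSq (ψ v) : ℝ) : ℂ) := by
    simp [innC, Complex.mul_conj]
  rw [he, Complex.ofReal_ne_zero]
  obtain ⟨v, hv⟩ := Function.ne_iff.mp h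
  have : (0:ℝ) < ∑ v, Complex.normSq (ψ v) :=
    Finset.sum_pos' (fun i _ => Complex.normSq_nonneg _)
      ⟨v, Finset.mem_univ v, Complex.normSq_pos.mpr hv⟩
  linarith

/-- `Re⟨F(ψ, w), ψ⟩ = 0` for nonzero `ψ`. -/
lemma re_inn_F {V : Type*} [Fintype V] (w : V × V → ℝ)
    (hw : ∀ u v : V, w (u, v) = w (v, u)) (a : V → ℝ) (γ : ℝ)
    (ψ : V → ℂ) (hψ : ψ ≠ 0) :
    (innC (Fnls w a γ ψ) ψ).re = 0 := by
  have hproj : innC (projPerp ψ (dissip w a ψ)) ψ = 0 := by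
    have : innC (projPerp ψ (dissip w a ψ)) ψ
        = innC (dissip w a ψ) ψ
          - (innC (dissip w a ψ) ψ / innC ψ ψ) * innC ψ ψ := by
      simp only [innC, projPerp, Pi.sub_apply, Pi.smul_apply, smul_eq_mul, sub_mul,
        Finset.sum_sub_distrib, Finset.mul_sum]
      congr 1
      exact Finset.sum_congr rfl fun v _ => by ring
    rw [this, div_mul_cancel₀ _ (innC_self_ne hψ), sub_self]
  have hsplit : innC (Fnls w a γ ψ) ψ
      = -Complex.I * ((∑ v, lapW w ψ v * (starRingEnd ℂ) (ψ v))
          + ∑ v, ((a v : ℝ) : ℂ) * (ψ v * (starRingEnd ℂ) (ψ v)))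
        - ((γ : ℝ) : ℂ) * innC (projPerp ψ (dissip w a ψ)) ψ := by
    simp only [innC, Fnls, sub_mul, Finset.sum_sub_distrib]
    congr 1
    · rw [mul_add, Finset.mul_sum, Finset.mul_sum, ← Finset.sum_add_distrib]
      exact Finset.sum_congr rfl fun v _ => by ring
    · rw [Finset.mul_sum]
      exact Finset.sum_congr rfl fun v _ => by ring
  rw [hsplit, hproj, mul_zero, sub_zero]
  have him : ((∑ v, lapW w ψ v * (starRingEnd ℂ) (ψ v))
      + ∑ v, ((a v : ℝ) : ℂ) * (ψ v * (starRingEnd ℂ) (ψ v))).im = 0 := by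
    rw [Complex.add_im, lap_sum_real w hw ψ]
    have : (∑ v, ((a v : ℝ) : ℂ) * (ψ v * (starRingEnd ℂ) (ψ v)))
        = ((∑ v, a v * Complex.normSq (ψ v) : ℝ) : ℂ) := by
      push_cast
      refine Finset.sum_congr rfl fun v _ => ?_
      rw [Complex.mul_conj]
    rw [this]
    simp
  simp [Complex.neg_re, Complex.mul_re, Complex.I_re, Complex.I_im, him]

/-- For every nonzero `ψ`, `Re⟨F(ψ, w), ψ⟩ = 0`; consequently every everywhere-nonzero
differentiable solution of `ψ′ = F(ψ, w)` has conserved norm `‖ψ(t)‖ = ‖ψ(0)‖`, so the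
unit sphere in `ℂ^V` is invariant under the flow. -/
theorem nls_norm_conservation {V : Type*} [Fintype V] [DecidableEq V] [Nonempty V]
    (w : V × V → ℝ) (hw : ∀ u v : V, w (u, v) = w (v, u)) (hw0 : ∀ v : V, w (v, v) = 0)
    (a : V → ℝ) (γ : ℝ) :
    (∀ ψ : V → ℂ, ψ ≠ 0 → (innC (Fnls w a γ ψ) ψ).re = 0) ∧
    (∀ ψ : ℝ → V → ℂ, (∀ t, ψ t ≠ 0) →
      (∀ t, HasDerivAt ψ (Fnls w a γ (ψ t)) t) →
      ∀ t, ∑ v, ‖ψ t v‖ ^ 2 = ∑ v, ‖ψ 0 v‖ ^ 2) := by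
  refine ⟨fun ψ hψ => re_inn_F w hw a γ ψ hψ, ?_⟩
  intro ψ hne hd
  set N : ℝ → ℝ := fun t => ∑ v, ‖ψ t v‖ ^ 2 with hN
  have key : ∀ t, HasDerivAt N 0 t := by
    intro t
    set F := Fnls w a γ (ψ t) with hF
    have hv : ∀ v, HasDerivAt (fun s => ψ s v) (F v) t := fun v =>
      (hasDerivAt_pi.mp (hd t)) v
    have hcomp : ∀ v : V, HasDerivAt (fun s => ‖ψ s v‖ ^ 2)
        (2 * ((ψ t v).re * (F v).re + (ψ t v).im * (F v).im)) t := by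
      intro v
      have hre' : HasDerivAt (fun s => (ψ s v).re) ((F v).re) t :=
        Complex.reCLM.hasFDerivAt.comp_hasDerivAt t (hv v)
      have him' : HasDerivAt (fun s => (ψ s v).im) ((F v).im) t :=
        Complex.imCLM.hasFDerivAt.comp_hasDerivAt t (hv v)
      have h := ((hre'.mul hre').add (him'.mul him'))
      have heq : (fun s => (ψ s v).re * (ψ s v).re + (ψ s v).im * (ψ s v).im)
          = fun s => ‖ψ s v‖ ^ 2 := by
        funext s
        rw [Complex.sq_norm, Complex.normSq_apply]
      simp only [Pi.mul_def, Pi.add_def] at h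
      rw [heq] at h
      refine h.congr_deriv ?_
      ring
    have hsum := HasDerivAt.sum (fun v (_ : v ∈ Finset.univ) => hcomp v)
    have hzero : (∑ v ∈ Finset.univ,
        2 * ((ψ t v).re * (F v).re + (ψ t v).im * (F v).im)) = 0 := by
      have h0 := re_inn_F w hw a γ (ψ t) (hne t)
      have : (innC (Fnls w a γ (ψ t)) (ψ t)).re
          = ∑ v, ((F v).re * (ψ t v).re + (F v).im * (ψ t v).im) := by
        rw [innC, Complex.re_sum]
        refine Finset.sum_congr rfl fun v _ => ?_
        simp only [Complex.mul_re, Complex.conj_re, Complex.conj_im]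
        ring
      rw [this] at h0
      calc (∑ v, 2 * ((ψ t v).re * (F v).re + (ψ t v).im * (F v).im))
          = 2 * ∑ v, ((F v).re * (ψ t v).re + (F v).im * (ψ t v).im) := by
            rw [Finset.mul_sum]; exact Finset.sum_congr rfl fun v _ => by ring
        _ = 0 := by rw [h0]; ring
    have hNe : N = fun t => ∑ v ∈ Finset.univ, ‖ψ t v‖ ^ 2 := rfl
    rw [hNe, ← hzero]
    rw [Finset.sum_fn] at hsum
    exact hsum
  intro t
  have hdiff : Differentiable ℝ N := fun s => (key s).differentiableAt
  have hderiv : ∀ s, deriv N s = 0 := fun s => (key s).deriv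
  exact is_const_of_deriv_eq_zero hdiff hderiv t 0
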